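/- Let T be a Hausdorff tree, α a limit ordinal of cofinality κ, and H ⊆ T_α a simple set. Then for every cofinal sequence (α_ξ)_{ξ<κ} in α there exists a regressive map π : H → ⋃_{ξ<κ} T_{α_ξ} with the property that for all x, y ∈ H, if the intervals [π(x), x] = {z ∈ T : π(x) ≤ z ≤ x} and [π(y), y] have nonempty intersection, then x = y. -/

import Mathlib

open Set

/-- A partial order is a tree order if the set of strict predecessors of
each element is well-ordered. -/
def IsTreeOrder (T : Type) [PartialOrder T] : Prop :=
  ∀ x : T, IsWellOrder {y : T // y < x} (fun a b => (a : T) < (b : T))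

/-- The height of an element of a tree: the order type of its set of strict
predecessors. -/
noncomputable def treeHt {T : Type} [PartialOrder T] (hT : IsTreeOrder T) (x : T) : Ordinal :=
  @Ordinal.type {y : T // y < x} (fun a b => (a : T) < (b : T)) (hT x)

/-- The level of a tree of order `α`. -/
def treeLevel {T : Type} [PartialOrder T] (hT : IsTreeOrder T) (α : Ordinal) : Set T :=
  {x : T | treeHt hT x = α}

/-- `f` is a cofinal sequence in the limit ordinal `α`: it is a strictly increasing
`cf α`-indexed sequence of ordinals below `α` whose supremum is `α`. -/
def IsCofinalSeq (α : Ordinal) (f : Ordinal → Ordinal) : Prop :=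
  (∀ ξ η : Ordinal, ξ < η → η < α.cof.ord → f ξ < f η) ∧
  (∀ ξ : Ordinal, ξ < α.cof.ord → f ξ < α) ∧
  (∀ β : Ordinal, β < α → ∃ ξ : Ordinal, ξ < α.cof.ord ∧ β ≤ f ξ)

/-- A subset `H` of the level `T_α` (`α` a limit ordinal) is simple if for some
cofinal sequence `(α_ξ)_{ξ < cf α}` in `α` there is an injective regressive map
from `H` into `⋃_{ξ < cf α} T_{α_ξ}`. -/
def TreeSimple {T : Type} [PartialOrder T] (hT : IsTreeOrder T) (α : Ordinal)
    (H : Set T) : Prop :=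
  ∃ f : Ordinal → Ordinal, IsCofinalSeq α f ∧
    ∃ π : T → T, Set.InjOn π H ∧
      ∀ x ∈ H, π x < x ∧ ∃ ξ : Ordinal, ξ < α.cof.ord ∧ treeHt hT (π x) = f ξ

/-- A tree is Hausdorff if every nonempty totally ordered subset has at most one
minimal upper bound. -/
def IsHausdorffTree (T : Type) [PartialOrder T] : Prop :=
  ∀ A : Set T, A.Nonempty → IsChain (· ≤ ·) A → ∀ u v : T,
    u ∈ upperBounds A → (∀ w ∈ upperBounds A, ¬ w < u) →
    v ∈ upperBounds A → (∀ w ∈ upperBounds A, ¬ w < v) → u = v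

/-- The interval topology on a tree, generated by the sets `(x, z]` and `(0, z]`. -/
def intervalTopology (T : Type) [PartialOrder T] : TopologicalSpace T :=
  TopologicalSpace.generateFrom
    ({s : Set T | ∃ x z : T, s = Set.Ioc x z} ∪ {s : Set T | ∃ z : T, s = Set.Iic z})


section AuxLemmas

variable {T : Type} [PartialOrder T]

lemma treeHt_eq_typein (hT : IsTreeOrder T) {u x : T} (h : u < x) :
    treeHt hT u =
      @Ordinal.typein {y : T // y < x} (fun a b => (a : T) < (b : T)) (hT x) ⟨u, h⟩ := by
  letI := hT x
  letI := hT u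
  rw [← Ordinal.type_subrel]
  refine Ordinal.type_eq.2 ⟨⟨⟨fun w => ⟨⟨w.1, lt_trans w.2 h⟩, w.2⟩,
    fun b => ⟨b.1.1, b.2⟩, fun w => rfl, fun b => rfl⟩, Iff.rfl⟩⟩

lemma treeHt_lt (hT : IsTreeOrder T) {u x : T} (h : u < x) :
    treeHt hT u < treeHt hT x := by
  letI := hT x
  rw [treeHt_eq_typein hT h]
  exact Ordinal.typein_lt_type _ _

lemma treeHt_le_of_le (hT : IsTreeOrder T) {u x : T} (h : u ≤ x) :
    treeHt hT u ≤ treeHt hT x := by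
  rcases lt_or_eq_of_le h with h | h
  · exact le_of_lt (treeHt_lt hT h)
  · rw [h]

lemma pred_unique (hT : IsTreeOrder T) {u v x : T} (hu : u < x) (hv : v < x)
    (h : treeHt hT u = treeHt hT v) : u = v := by
  letI := hT x
  rw [treeHt_eq_typein hT hu, treeHt_eq_typein hT hv] at h
  have := Ordinal.typein_injective (fun a b : {y : T // y < x} => (a : T) < (b : T)) h
  exact congrArg Subtype.val this

lemma pred_tricho (hT : IsTreeOrder T) {u v x : T} (hu : u < x) (hv : v < x) :
    u < v ∨ u = v ∨ v < u := by
  letI := hT x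
  have := trichotomous (r := fun a b : {y : T // y < x} => (a : T) < (b : T)) ⟨u, hu⟩ ⟨v, hv⟩
  rcases this with h | h | h
  · exact Or.inl h
  · exact Or.inr (Or.inl (congrArg Subtype.val h))
  · exact Or.inr (Or.inr h)

lemma pred_le_of_ht_le (hT : IsTreeOrder T) {u v x : T} (hu : u < x) (hv : v < x)
    (h : treeHt hT u ≤ treeHt hT v) : u ≤ v := by
  rcases pred_tricho hT hu hv with h' | h' | h'
  · exact le_of_lt h'
  · exact le_of_eq h'
  · exact absurd (treeHt_lt hT h') (not_lt_of_ge h)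

lemma pred_exists (hT : IsTreeOrder T) {x : T} {β : Ordinal} (h : β < treeHt hT x) :
    ∃ u, u < x ∧ treeHt hT u = β := by
  letI := hT x
  set r := fun a b : {y : T // y < x} => (a : T) < (b : T) with hr
  have h' : β < Ordinal.type r := h
  refine ⟨(Ordinal.enum r ⟨β, h'⟩ : {y : T // y < x}).1,
    (Ordinal.enum r ⟨β, h'⟩ : {y : T // y < x}).2, ?_⟩
  rw [treeHt_eq_typein hT (Ordinal.enum r ⟨β, h'⟩ : {y : T // y < x}).2]
  exact Ordinal.typein_enum r h'

open Classical in
noncomputable def treeRestrict (hT : IsTreeOrder T) (x : T) (β : Ordinal) : T :=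
  if h : ∃ u, u < x ∧ treeHt hT u = β then h.choose else x

lemma treeRestrict_spec (hT : IsTreeOrder T) {x : T} {β : Ordinal} (h : β < treeHt hT x) :
    treeRestrict hT x β < x ∧ treeHt hT (treeRestrict hT x β) = β := by
  have hex := pred_exists hT h
  rw [treeRestrict, dif_pos hex]
  exact hex.choose_spec

lemma treeRestrict_eq (hT : IsTreeOrder T) {x u : T} (hu : u < x) :
    treeRestrict hT x (treeHt hT u) = u := by
  have hex : ∃ u', u' < x ∧ treeHt hT u' = treeHt hT u := ⟨u, hu, rfl⟩
  rw [treeRestrict, dif_pos hex]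
  exact pred_unique hT hex.choose_spec.1 hu hex.choose_spec.2

lemma treeRestrict_of_ge (hT : IsTreeOrder T) {x : T} {β : Ordinal}
    (h : treeHt hT x ≤ β) : treeRestrict hT x β = x := by
  rw [treeRestrict, dif_neg]
  rintro ⟨u, hu, hht⟩
  exact absurd (treeHt_lt hT hu) (not_lt_of_ge (hht ▸ h))

lemma chains_eq (hT : IsTreeOrder T) (hHaus : IsHausdorffTree T) {α : Ordinal}
    (hα : Order.IsSuccLimit α) {x y : T} (hx : treeHt hT x = α) (hy : treeHt hT y = α)
    (hagree : ∀ β < α, treeRestrict hT x β = treeRestrict hT y β) : x = y := by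
  set A : Set T := {u : T | u < x} with hA
  have hmem : ∀ u : T, u < x ↔ u < y := by
    intro u
    constructor
    · intro hu
      have hβ : treeHt hT u < α := hx ▸ treeHt_lt hT hu
      have h1 : treeRestrict hT x (treeHt hT u) = u := treeRestrict_eq hT hu
      have h2 := (treeRestrict_spec hT (x := y) (β := treeHt hT u) (by rw [hy]; exact hβ)).1
      rwa [← hagree _ hβ, h1] at h2
    · intro hu
      have hβ : treeHt hT u < α := hy ▸ treeHt_lt hT hu
      have h1 : treeRestrict hT y (treeHt hT u) = u := treeRestrict_eq hT hu
      have h2 := (treeRestrict_spec hT (x := x) (β := treeHt hT u) (by rw [hx]; exact hβ)).1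
      rwa [hagree _ hβ, h1] at h2
  have hAne : A.Nonempty := by
    have h0 : (0 : Ordinal) < treeHt hT x := by rw [hx]; exact hα.pos
    exact ⟨treeRestrict hT x 0, (treeRestrict_spec hT h0).1⟩
  have hchain : IsChain (· ≤ ·) A := by
    intro u hu v hv huv
    rcases pred_tricho hT hu hv with h | h | h
    · exact Or.inl (le_of_lt h)
    · exact absurd h huv
    · exact Or.inr (le_of_lt h)
  have hubmin : ∀ w : T, (∀ u, u < x → u ≤ w) → ¬ w < x := by
    intro w hw hwx
    have hwα : treeHt hT w < α := hx ▸ treeHt_lt hT hwx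
    have hsucc : treeHt hT w + 1 < α := by
      rw [Ordinal.add_one_eq_succ]
      exact hα.succ_lt hwα
    have hsucc' : treeHt hT w + 1 < treeHt hT x := by rw [hx]; exact hsucc
    obtain ⟨hv, hvht⟩ := treeRestrict_spec hT hsucc'
    have hle := hw _ hv
    have hh := treeHt_le_of_le hT hle
    rw [hvht] at hh
    have : treeHt hT w < treeHt hT w + 1 := by
      rw [Ordinal.add_one_eq_succ]; exact Order.lt_succ _
    exact lt_irrefl _ (lt_of_lt_of_le this hh)
  refine hHaus A hAne hchain x y (fun u hu => le_of_lt hu) ?_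
    (fun u hu => le_of_lt ((hmem u).1 hu)) ?_
  · intro w hw
    exact hubmin w (fun u hu => hw hu)
  · intro w hw hwy
    have hwx : w < x := (hmem w).2 hwy
    exact hubmin w (fun u hu => hw hu) hwx

noncomputable def treeDelta (hT : IsTreeOrder T) (x y : T) : Ordinal :=
  sInf {β | treeRestrict hT x β ≠ treeRestrict hT y β}

lemma treeDelta_spec (hT : IsTreeOrder T) (hHaus : IsHausdorffTree T) {α : Ordinal}
    (hα : Order.IsSuccLimit α) {x y : T} (hx : treeHt hT x = α) (hy : treeHt hT y = α) (hxy : x ≠ y) :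
    treeDelta hT x y < α ∧
      treeRestrict hT x (treeDelta hT x y) ≠ treeRestrict hT y (treeDelta hT x y) := by
  have hne : {β | treeRestrict hT x β ≠ treeRestrict hT y β}.Nonempty := by
    refine ⟨α, ?_⟩
    rw [mem_setOf_eq, treeRestrict_of_ge hT (le_of_eq hx), treeRestrict_of_ge hT (le_of_eq hy)]
    exact hxy
  have hmem := csInf_mem hne
  refine ⟨?_, hmem⟩
  by_contra hge
  push_neg at hge
  refine hxy (chains_eq hT hHaus hα hx hy ?_)
  intro β hβ
  by_contra hne'
  exact absurd (le_trans hge (csInf_le' hne')) (not_le_of_gt hβ)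

/-- If `H ⊆ T_α` is simple, then for every cofinal sequence `(α_ξ)_{ξ<κ}` in `α` there is a
regressive map `π : H → ⋃_{ξ<κ} T_{α_ξ}` such that the intervals `[π(x), x]`, `x ∈ H`, are
pairwise disjoint. -/
theorem stmt_9 {T : Type} [PartialOrder T] (hT : IsTreeOrder T) (hHaus : IsHausdorffTree T)
    (α : Ordinal) (hα : Order.IsSuccLimit α) (H : Set T) (hH : H ⊆ treeLevel hT α)
    (hsimple : TreeSimple hT α H)
    (f : Ordinal → Ordinal) (hf : IsCofinalSeq α f) :
    ∃ π : T → T, (∀ x ∈ H, π x < x) ∧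
      (∀ x ∈ H, ∃ ξ : Ordinal, ξ < α.cof.ord ∧ treeHt hT (π x) = f ξ) ∧
      (∀ x ∈ H, ∀ y ∈ H, (Set.Icc (π x) x ∩ Set.Icc (π y) y).Nonempty → x = y) := by
  classical
  obtain ⟨g, hg, σ, hσinj, hσ⟩ := hsimple
  have key : ∀ x : T, ∃ p : T, x ∈ H →
      p < x ∧ (∃ ξ : Ordinal, ξ < α.cof.ord ∧ treeHt hT p = f ξ) ∧ σ x ≤ p ∧
      ∀ y ∈ H, y ≠ x → σ y < x → treeHt hT (σ y) < treeHt hT (σ x) →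
        treeDelta hT x y ≤ treeHt hT p := by
    intro x
    by_cases hx : x ∈ H
    swap
    · exact ⟨x, fun h => absurd h hx⟩
    obtain ⟨hσx_lt, ζ0, hζ0κ, hζ0⟩ := hσ x hx
    have hxα : treeHt hT x = α := hH hx
    have hβx : treeHt hT (σ x) < α := hxα ▸ treeHt_lt hT hσx_lt
    obtain ⟨ζs, hζsκ, hζs⟩ := hg.2.2 _ hβx
    set F : ∀ ζ, ζ < ζs → Ordinal := fun ζ _ =>
      if h : ∃ y, y ∈ H ∧ y ≠ x ∧ σ y < x ∧ treeHt hT (σ y) = g ζ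
      then treeDelta hT x h.choose else 0 with hF
    have hFlt : ∀ ζ (hζ : ζ < ζs), F ζ hζ < α := by
      intro ζ hζ
      simp only [hF]
      split_ifs with h
      · obtain ⟨hy1, hy2, hy3, hy4⟩ := h.choose_spec
        exact (treeDelta_spec hT hHaus hα hxα (hH hy1) (Ne.symm hy2)).1
      · exact hα.pos
    have hcard : ζs.card < α.cof := Cardinal.lt_ord.1 hζsκ
    have hbsup : Ordinal.bsup ζs F < α := Ordinal.bsup_lt_ord hcard hFlt
    have hsα : max (treeHt hT (σ x)) (Ordinal.bsup ζs F) < α := max_lt hβx hbsup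
    obtain ⟨ξ, hξκ, hξ⟩ := hf.2.2 _ hsα
    have hfξα : f ξ < treeHt hT x := by rw [hxα]; exact hf.2.1 ξ hξκ
    obtain ⟨hp_lt, hp_ht⟩ := treeRestrict_spec hT hfξα
    refine ⟨treeRestrict hT x (f ξ), fun _ => ⟨hp_lt, ⟨ξ, hξκ, hp_ht⟩, ?_, ?_⟩⟩
    · apply pred_le_of_ht_le hT hσx_lt hp_lt
      rw [hp_ht]
      exact le_trans (le_max_left _ _) hξ
    · intro y hy hyx hσy_lt hht
      obtain ⟨-, ζy, hζyκ, hζy⟩ := hσ y hy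
      have hζyζs : ζy < ζs := by
        by_contra hcon
        push_neg at hcon
        have hle : g ζs ≤ g ζy := by
          rcases lt_or_eq_of_le hcon with h' | h'
          · exact le_of_lt (hg.1 ζs ζy h' hζyκ)
          · rw [h']
        have hcontra : treeHt hT (σ x) ≤ treeHt hT (σ y) :=
          le_trans hζs (by rw [hζy]; exact hle)
        exact absurd hht (not_lt_of_ge hcontra)
      have hex : ∃ y', y' ∈ H ∧ y' ≠ x ∧ σ y' < x ∧ treeHt hT (σ y') = g ζy :=
        ⟨y, hy, hyx, hσy_lt, hζy⟩
      have hFval : F ζy hζyζs = treeDelta hT x hex.choose := by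
        simp only [hF]
        rw [dif_pos hex]
      have hchoose : hex.choose = y := by
        obtain ⟨hc1, hc2, hc3, hc4⟩ := hex.choose_spec
        have hcc : σ hex.choose = σ y := pred_unique hT hc3 hσy_lt (by rw [hc4, hζy])
        exact hσinj hc1 hy hcc
      calc treeDelta hT x y = F ζy hζyζs := by rw [hFval, hchoose]
        _ ≤ Ordinal.bsup ζs F := Ordinal.le_bsup F ζy hζyζs
        _ ≤ max (treeHt hT (σ x)) (Ordinal.bsup ζs F) := le_max_right _ _
        _ ≤ f ξ := hξ
        _ = treeHt hT (treeRestrict hT x (f ξ)) := hp_ht.symm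
  choose π hπ using key
  refine ⟨π, fun x hx => (hπ x hx).1, fun x hx => (hπ x hx).2.1, ?_⟩
  have final : ∀ a b z : T, a ∈ H → b ∈ H → a ≠ b → z < a → z < b → π a ≤ z →
      treeDelta hT a b ≤ treeHt hT (π a) → False := by
    intro a b z ha hb hab hza hzb hπaz hΔ
    obtain ⟨hΔα, hΔne⟩ := treeDelta_spec hT hHaus hα (hH ha) (hH hb) hab
    have hΔz : treeDelta hT a b ≤ treeHt hT z := le_trans hΔ (treeHt_le_of_le hT hπaz)
    have hw : ∃ w, w ≤ z ∧ treeHt hT w = treeDelta hT a b := by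
      rcases lt_or_eq_of_le hΔz with h | h
      · have h' : treeDelta hT a b < treeHt hT z := h
        obtain ⟨w, hw1, hw2⟩ := pred_exists hT h'
        exact ⟨w, le_of_lt hw1, hw2⟩
      · exact ⟨z, le_rfl, h.symm⟩
    obtain ⟨w, hwz, hwht⟩ := hw
    have hwa : w < a := lt_of_le_of_lt hwz hza
    have hwb : w < b := lt_of_le_of_lt hwz hzb
    have h1 : treeRestrict hT a (treeDelta hT a b) = w := by
      rw [← hwht]; exact treeRestrict_eq hT hwa
    have h2 : treeRestrict hT b (treeDelta hT a b) = w := by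
      rw [← hwht]; exact treeRestrict_eq hT hwb
    exact hΔne (h1.trans h2.symm)
  rintro x hx y hy ⟨z, ⟨hπxz, hzx⟩, ⟨hπyz, hzy⟩⟩
  by_contra hxy
  have hxα : treeHt hT x = α := hH hx
  have hyα : treeHt hT y = α := hH hy
  have hzltx : z < x := by
    rcases lt_or_eq_of_le hzx with h | h
    · exact h
    · exfalso
      have hxle : x ≤ y := h ▸ hzy
      rcases lt_or_eq_of_le hxle with h' | h'
      · have := treeHt_lt hT h'
        rw [hxα, hyα] at this
        exact lt_irrefl α this
      · exact hxy h'
  have hzlty : z < y := by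
    rcases lt_or_eq_of_le hzy with h | h
    · exact h
    · exfalso
      have hyle : y ≤ x := h ▸ hzx
      rcases lt_or_eq_of_le hyle with h' | h'
      · have := treeHt_lt hT h'
        rw [hxα, hyα] at this
        exact lt_irrefl α this
      · exact hxy h'.symm
  obtain ⟨hπx_lt, -, hσx_le, hdx⟩ := hπ x hx
  obtain ⟨hπy_lt, -, hσy_le, hdy⟩ := hπ y hy
  have hσxz : σ x ≤ z := le_trans hσx_le hπxz
  have hσyz : σ y ≤ z := le_trans hσy_le hπyz
  have hσy_lt_x : σ y < x := lt_of_le_of_lt hσyz hzltx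
  have hσx_lt_y : σ x < y := lt_of_le_of_lt hσxz hzlty
  have hσx_lt_x : σ x < x := lt_of_le_of_lt hσxz hzltx
  rcases lt_trichotomy (treeHt hT (σ x)) (treeHt hT (σ y)) with h | h | h
  · exact final y x z hy hx (Ne.symm hxy) hzlty hzltx hπyz (hdy x hx hxy hσx_lt_y h)
  · have hcc : σ x = σ y := pred_unique hT hσx_lt_x hσy_lt_x h
    exact hxy (hσinj hx hy hcc)
  · exact final x y z hx hy hxy hzltx hzlty hπxz (hdx y hy (Ne.symm hxy) hσy_lt_x h)
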